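/- Let P be a finite partially ordered set and let F, G : P × P → R be functions into a commutative ring R such that F(a,b) = 0 and G(a,b) = 0 unless a ≤ b. Define the matrix M indexed by P with entries M(a,b) = Σ_{c ∈ P} F(c,a)·G(c,b). Then det M = Π_{a ∈ P} F(a,a)·G(a,a). -/
import Mathlib

private lemma perm_eq_one_of_le {P : Type*} [Fintype P] [PartialOrder P]
    (σ : Equiv.Perm P) (h : ∀ a, σ a ≤ a) : σ = 1 := by
  ext a
  have hanti : ∀ n : ℕ, σ^[n + 1] a ≤ σ^[n] a := fun n => by
    rw [Function.iterate_succ_apply']; exact h _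
  have hmono : Antitone fun n => σ^[n] a :=
    antitone_nat_of_succ_le fun n => hanti n
  have hn : 0 < orderOf σ := orderOf_pos σ
  have hfix : σ^[orderOf σ] a = a := by
    have := pow_orderOf_eq_one σ
    have : (σ ^ orderOf σ) a = a := by rw [this]; rfl
    rwa [Equiv.Perm.coe_pow] at this
  have h1 : a ≤ σ a := by
    calc a = σ^[orderOf σ] a := hfix.symm
    _ ≤ σ^[1] a := hmono hn
    _ = σ a := by simp
  exact le_antisymm (h a) h1

private lemma det_tri {P : Type*} [Fintype P] [PartialOrder P] [DecidableEq P]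
    {R : Type*} [CommRing R] (F : P → P → R)
    (hF : ∀ a b, ¬ a ≤ b → F a b = 0) :
    Matrix.det (Matrix.of F) = ∏ a : P, F a a := by
  rw [Matrix.det_apply]
  rw [Finset.sum_eq_single (1 : Equiv.Perm P)]
  · simp
  · intro σ _ hσ
    have : ¬ ∀ a, σ a ≤ a := fun hall => hσ (perm_eq_one_of_le σ hall)
    push_neg at this
    obtain ⟨a, ha⟩ := this
    have : ∏ i, Matrix.of F (σ i) i = 0 :=
      Finset.prod_eq_zero (Finset.mem_univ a) (hF _ _ ha)
    rw [this, smul_zero]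
  · simp

theorem det_incidence_matrix {P : Type*} [Fintype P] [PartialOrder P] [DecidableEq P]
    {R : Type*} [CommRing R] (F G : P → P → R)
    (hF : ∀ a b, ¬ a ≤ b → F a b = 0) (hG : ∀ a b, ¬ a ≤ b → G a b = 0) :
    Matrix.det (Matrix.of fun a b : P => ∑ c : P, F c a * G c b) =
      ∏ a : P, F a a * G a a := by
  have hM : (Matrix.of fun a b : P => ∑ c : P, F c a * G c b) =
      (Matrix.of F).transpose * Matrix.of G := by
    ext a b
    simp [Matrix.mul_apply]
  rw [hM, Matrix.det_mul, Matrix.det_transpose, det_tri F hF, det_tri G hG,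
    ← Finset.prod_mul_distrib]
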